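/- For all n ≥ 1 and k ∈ ℕ, the circular Laguerre polynomial L_{n,k} has degree n and all of its roots lie on the unit circle {z ∈ ℂ : |z| = 1}. -/

import Mathlib

/-- The circular Laguerre polynomial
`L_{n,k}(z) = i^k ∑_{j=0}^n (−1)^{n−j} C(n,j) (j − n/2)^k z^j`. -/
noncomputable def circLaguerre (n k : ℕ) : Polynomial ℂ :=
  ∑ j ∈ Finset.range (n + 1),
    Polynomial.C (Complex.I ^ k * (-1) ^ (n - j) * (n.choose j : ℂ) * ((j : ℂ) - n / 2) ^ k) *
      Polynomial.X ^ j

open Polynomial Finset Complex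

lemma cL_coeff (n k m : ℕ) :
    (circLaguerre n k).coeff m =
      if m ≤ n then Complex.I ^ k * (-1) ^ (n - m) * (n.choose m : ℂ) * ((m : ℂ) - n / 2) ^ k
      else 0 := by
  rw [circLaguerre, finset_sum_coeff]
  simp only [coeff_C_mul, coeff_X_pow, mul_ite, mul_one, mul_zero]
  rw [Finset.sum_ite_eq (Finset.range (n+1)) m]
  simp [Nat.lt_succ_iff]

lemma cL_coeff_top (n k : ℕ) (hn : 1 ≤ n) : (circLaguerre n k).coeff n ≠ 0 := by
  rw [cL_coeff, if_pos le_rfl, Nat.sub_self, Nat.choose_self]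
  have h2 : ((n : ℂ) - n / 2) = n / 2 := by ring
  have hne : ((n : ℂ) / 2) ≠ 0 := by
    simp only [div_ne_zero_iff, Ne, Nat.cast_eq_zero]
    exact ⟨by omega, two_ne_zero⟩
  rw [h2]
  simp only [pow_zero, one_mul, mul_one, Nat.cast_one]
  exact mul_ne_zero (pow_ne_zero _ I_ne_zero) (pow_ne_zero _ hne)

lemma cL_natDegree (n k : ℕ) (hn : 1 ≤ n) : (circLaguerre n k).natDegree = n := by
  apply le_antisymm
  · apply natDegree_le_iff_coeff_eq_zero.mpr
    intro m hm
    rw [cL_coeff, if_neg (by omega)]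
  · exact le_natDegree_of_ne_zero (cL_coeff_top n k hn)

lemma X_mul_deriv_coeff (p : Polynomial ℂ) (m : ℕ) :
    (X * derivative p).coeff m = p.coeff m * m := by
  cases m with
  | zero => simp
  | succ m => rw [coeff_X_mul, coeff_derivative]; push_cast; ring

lemma cL_rec (n k : ℕ) :
    circLaguerre n (k + 1) =
      Polynomial.C Complex.I *
        (X * derivative (circLaguerre n k) - Polynomial.C ((n : ℂ) / 2) * circLaguerre n k) := by
  ext m
  rw [coeff_C_mul, coeff_sub, X_mul_deriv_coeff, coeff_C_mul, cL_coeff, cL_coeff]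
  by_cases h : m ≤ n
  · rw [if_pos h, if_pos h]
    ring
  · rw [if_neg h, if_neg h]
    ring

lemma cL_zero_eval (n : ℕ) (z : ℂ) :
    (circLaguerre n 0).eval z = (z - 1) ^ n := by
  rw [circLaguerre, eval_finset_sum, sub_pow]
  apply Finset.sum_congr rfl
  intro j hj
  rw [Finset.mem_range] at hj
  have : ((-1 : ℂ)) ^ (n - j) = (-1) ^ (j + n) := by
    rw [show j + n = n - j + 2 * j by omega, pow_add]
    simp [pow_mul]
  simp only [eval_mul, eval_C, eval_pow, eval_X, pow_zero, mul_one, one_mul, one_pow]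
  rw [this]
  ring

lemma logderiv_aux (z : ℂ) (s : Multiset ℂ) (h : ∀ a ∈ s, z ≠ a) :
    eval z (derivative (s.map (fun a => X - Polynomial.C a)).prod) =
      eval z ((s.map (fun a => X - Polynomial.C a)).prod) *
        (s.map (fun a => (z - a)⁻¹)).sum := by
  induction s using Multiset.induction_on with
  | empty => simp
  | cons a s ih =>
    have hza : z - a ≠ 0 := sub_ne_zero.mpr (h a (Multiset.mem_cons_self a s))
    have ih' := ih (fun b hb => h b (Multiset.mem_cons_of_mem hb))
    simp only [Multiset.map_cons, Multiset.prod_cons, Multiset.sum_cons, derivative_mul,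
      derivative_sub, derivative_X, derivative_C, sub_zero, one_mul, eval_add, eval_mul,
      eval_sub, eval_X, eval_C, ih']
    field_simp

lemma re_term (z a : ℂ) (ha : Complex.normSq a = 1) (hza : z ≠ a) :
    (z * (z - a)⁻¹ - 1 / 2).re = (Complex.normSq z - 1) * (2 * Complex.normSq (z - a))⁻¹ := by
  have hN : Complex.normSq (z - a) ≠ 0 :=
    ne_of_gt (Complex.normSq_pos.mpr (sub_ne_zero.mpr hza))
  rw [Complex.inv_def]
  have h1 : (z * ((starRingEnd ℂ) (z - a) * (((Complex.normSq (z - a))⁻¹ : ℝ) : ℂ)) - 1 / 2).re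
      = (z * (starRingEnd ℂ) (z - a)).re * (Complex.normSq (z - a))⁻¹ - 1 / 2 := by
    rw [← mul_assoc]
    simp [Complex.sub_re, Complex.mul_re, Complex.ofReal_re, Complex.ofReal_im]
  rw [h1]
  have h2 : (z * (starRingEnd ℂ) (z - a)).re = Complex.normSq z - (z * (starRingEnd ℂ) a).re := by
    rw [map_sub, mul_sub, Complex.sub_re]
    congr 1
    rw [Complex.normSq_apply, Complex.mul_re]
    simp
  have h3 : Complex.normSq (z - a) = Complex.normSq z - 2 * (z * (starRingEnd ℂ) a).re + 1 := by
    rw [Complex.normSq_sub, ha]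
    ring
  rw [h3] at hN
  rw [h2, h3]
  set r := (z * (starRingEnd ℂ) a).re with hr
  set t := Complex.normSq z with ht
  rw [mul_inv]
  linear_combination (1/2 : ℝ) * inv_mul_cancel₀ hN

lemma msum_sub (s : Multiset ℂ) (f g : ℂ → ℂ) :
    (s.map fun a => f a - g a).sum = (s.map f).sum - (s.map g).sum := by
  induction s using Multiset.induction_on with
  | empty => simp
  | cons a s ih => simp only [Multiset.map_cons, Multiset.sum_cons, ih]; ring

lemma msum_pos (s : Multiset ℝ) (h : ∀ x ∈ s, 0 < x) (hs : s ≠ 0) : 0 < s.sum := by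
  induction s using Multiset.induction_on with
  | empty => exact absurd rfl hs
  | cons a s _ =>
    rw [Multiset.sum_cons]
    have ha := h a (Multiset.mem_cons_self a s)
    have : 0 ≤ s.sum := Multiset.sum_nonneg (fun x hx => le_of_lt (h x (Multiset.mem_cons_of_mem hx)))
    linarith

lemma key_step (n : ℕ) (hn : 1 ≤ n) (p : Polynomial ℂ) (hdeg : p.natDegree = n)
    (hroots : ∀ a ∈ p.roots, ‖a‖ = 1) (z : ℂ) (hpz : p.eval z ≠ 0)
    (heq : z * (derivative p).eval z = ((n : ℂ) / 2) * p.eval z) :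
    ‖z‖ = 1 := by
  classical
  have hcard : Multiset.card p.roots = n := by
    rw [← hdeg]
    exact (splits_iff_card_roots).mp (IsAlgClosed.splits p)
  have hfac := C_leadingCoeff_mul_prod_multiset_X_sub_C (p := p) (by rw [hcard, hdeg])
  set P : Polynomial ℂ := (p.roots.map fun a => X - Polynomial.C a).prod with hP
  have hzroot : ∀ a ∈ p.roots, z ≠ a := by
    intro a ha hza
    subst hza
    exact hpz ((mem_roots'.mp ha).2)
  set S : ℂ := (p.roots.map fun a => (z - a)⁻¹).sum with hS
  have hld := logderiv_aux z p.roots hzroot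
  have hevalp : p.eval z = p.leadingCoeff * P.eval z := by
    conv_lhs => rw [← hfac]
    simp
  have hevalP : P.eval z ≠ 0 := by
    intro h0
    exact hpz (by rw [hevalp, h0, mul_zero])
  have hc : p.leadingCoeff ≠ 0 := leadingCoeff_ne_zero.mpr (fun h0 => hpz (by simp [h0]))
  have hderiv : (derivative p).eval z = p.leadingCoeff * (P.eval z * S) := by
    conv_lhs => rw [← hfac]
    rw [derivative_C_mul, eval_mul, eval_C, hld]
  have hzS : z * S = (n : ℂ) / 2 := by
    apply mul_left_cancel₀ (mul_ne_zero hc hevalP)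
    rw [hevalp, hderiv] at heq
    linear_combination heq
  -- complex sum of centered terms is zero
  have hsum0 : (p.roots.map fun a => z * (z - a)⁻¹ - 1 / 2).sum = 0 := by
    rw [msum_sub p.roots (fun a => z * (z - a)⁻¹) (fun _ => 1 / 2)]
    have h1 : (p.roots.map fun a => z * (z - a)⁻¹).sum = z * S := by
      rw [hS, ← Multiset.sum_map_mul_left]
    have h2 : (p.roots.map fun _ => (1 / 2 : ℂ)).sum = (n : ℂ) / 2 := by
      rw [Multiset.map_const', Multiset.sum_replicate, hcard, nsmul_eq_mul]
      ring
    rw [h1, h2, hzS, sub_self]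
  -- real part
  have hre0 : (p.roots.map fun a => (z * (z - a)⁻¹ - 1 / 2).re).sum = 0 := by
    have := congrArg Complex.re hsum0
    rwa [← Complex.coe_reAddGroupHom, map_multiset_sum, Multiset.map_map] at this
  have hre1 : (p.roots.map fun a => (z * (z - a)⁻¹ - 1 / 2).re).sum =
      (Complex.normSq z - 1) * (p.roots.map fun a => (2 * Complex.normSq (z - a))⁻¹).sum := by
    rw [← Multiset.sum_map_mul_left]
    apply congrArg
    apply Multiset.map_congr rfl
    intro a ha
    apply re_term
    · rw [Complex.normSq_eq_norm_sq, hroots a ha, one_pow]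
    · exact hzroot a ha
  have hpos : 0 < (p.roots.map fun a => (2 * Complex.normSq (z - a))⁻¹).sum := by
    apply msum_pos
    · intro x hx
      obtain ⟨a, ha, rfl⟩ := Multiset.mem_map.mp hx
      have h2 : 0 < Complex.normSq (z - a) :=
        Complex.normSq_pos.mpr (sub_ne_zero.mpr (hzroot a ha))
      positivity
    · intro h0
      have := congrArg Multiset.card h0
      rw [Multiset.card_map, hcard] at this
      simp at this
      omega
  have hnsq : Complex.normSq z = 1 := by
    by_contra h
    have := hre0.symm.trans hre1
    rcases lt_or_gt_of_ne h with hlt | hgt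
    · nlinarith
    · nlinarith
  rw [Complex.norm_def, hnsq, Real.sqrt_one]

theorem stmt4 (n k : ℕ) (hn : 1 ≤ n) :
    (circLaguerre n k).natDegree = n ∧
    ∀ z : ℂ, (circLaguerre n k).eval z = 0 → ‖z‖ = 1 := by
  refine ⟨cL_natDegree n k hn, ?_⟩
  induction k with
  | zero =>
    intro z hz
    rw [cL_zero_eval] at hz
    have : z = 1 := by
      have := pow_eq_zero_iff (n := n) (by omega) |>.mp hz
      linear_combination this
    rw [this]
    simp
  | succ k ih =>
    intro z hz
    rw [cL_rec, eval_mul, eval_C, eval_sub, eval_mul, eval_mul, eval_C, eval_X] at hz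
    have hz' : z * (derivative (circLaguerre n k)).eval z =
        ((n : ℂ) / 2) * (circLaguerre n k).eval z := by
      have hI : (Complex.I : ℂ) ≠ 0 := Complex.I_ne_zero
      have := (mul_eq_zero.mp hz).resolve_left hI
      linear_combination this
    by_cases hpz : (circLaguerre n k).eval z = 0
    · exact ih z hpz
    · apply key_step n hn (circLaguerre n k) (cL_natDegree n k hn) _ z hpz hz'
      intro a ha
      exact ih a (mem_roots'.mp ha).2
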